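/- For any ν_1,…,ν_N ∈ ℂ, B(ν_N) B(ν_{N−1}) ⋯ B(ν_1) |⇑⟩ = (∏_{k=1}^N a(ν_k)) |⇓⟩, where a(λ) = ∏_{k=1}^N (λ − ν_k + 1); in particular the partition function satisfies Z_N(ν_1,…,ν_N) = ∏_{k=1}^N a(ν_k). -/

import Mathlib

open scoped BigOperators
noncomputable section

namespace SixVertex

/-- A spin configuration of the `N`-site quantum chain: one spin (`0` = up, `1` = down)
at each site. Site `k` of the paper (k = 1,…,N) corresponds to index `k-1 : Fin N`. -/
abbrev Cfg (N : ℕ) := Fin N → Fin 2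

/-- Operators on the quantum space `H = (ℂ²)^{⊗N}`, represented as matrices in the
standard (spin-configuration) basis. -/
abbrev Op (N : ℕ) := Matrix (Cfg N) (Cfg N) ℂ

/-- The operator acting as the 2×2 matrix `M` in the `k`-th tensor factor and as the
identity elsewhere. -/
def siteOp {N : ℕ} (k : Fin N) (M : Matrix (Fin 2) (Fin 2) ℂ) : Op N :=
  Matrix.of fun s s' => if ∀ i, i ≠ k → s i = s' i then M (s k) (s' k) else 0

def piPlus : Matrix (Fin 2) (Fin 2) ℂ := !![1, 0; 0, 0]
def piMinus : Matrix (Fin 2) (Fin 2) ℂ := !![0, 0; 0, 1]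
def sigmaPlus : Matrix (Fin 2) (Fin 2) ℂ := !![0, 1; 0, 0]
def sigmaMinus : Matrix (Fin 2) (Fin 2) ℂ := !![0, 0; 1, 0]

/-- Rational weight `a(λ,ν) = λ - ν + 1`. -/
def aW (l v : ℂ) : ℂ := l - v + 1
/-- Rational weight `b(λ,ν) = λ - ν`. -/
def bW (l v : ℂ) : ℂ := l - v

/-- The L-operator at site `k` (a 2×2 matrix in the auxiliary space, with entries
operators on the quantum space); the weight `c` equals `1`. -/
def Lop {N : ℕ} (ν : Fin N → ℂ) (k : Fin N) (l : ℂ) :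
    Matrix (Fin 2) (Fin 2) (Op N) :=
  !![aW l (ν k) • siteOp k piPlus + bW l (ν k) • siteOp k piMinus,
       siteOp k sigmaMinus;
     siteOp k sigmaPlus,
       bW l (ν k) • siteOp k piPlus + aW l (ν k) • siteOp k piMinus]

/-- The monodromy matrix `T(λ) = L_N(λ,ν_N) ⋯ L_1(λ,ν_1)`. -/
def monodromy {N : ℕ} (ν : Fin N → ℂ) (l : ℂ) :
    Matrix (Fin 2) (Fin 2) (Op N) :=
  (((List.finRange N).reverse).map fun k => Lop ν k l).prod

/-- The operator `A(λ)`. -/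
def Aop {N : ℕ} (ν : Fin N → ℂ) (l : ℂ) : Op N := monodromy ν l 0 0
/-- The operator `B(λ)`. -/
def Bop {N : ℕ} (ν : Fin N → ℂ) (l : ℂ) : Op N := monodromy ν l 0 1
/-- The operator `C(λ)`. -/
def Cop {N : ℕ} (ν : Fin N → ℂ) (l : ℂ) : Op N := monodromy ν l 1 0
/-- The operator `D(λ)`. -/
def Dop {N : ℕ} (ν : Fin N → ℂ) (l : ℂ) : Op N := monodromy ν l 1 1

/-- The all-spins-up configuration. -/
def upCfg (N : ℕ) : Cfg N := fun _ => 0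
/-- The all-spins-down configuration. -/
def downCfg (N : ℕ) : Cfg N := fun _ => 1

/-- The basis vector of `H` corresponding to a spin configuration `s`. -/
def basisVec {N : ℕ} (s : Cfg N) : Cfg N → ℂ := Pi.single s 1

/-- The all-spins-up vacuum vector `|⇑⟩`. -/
def upVec (N : ℕ) : Cfg N → ℂ := basisVec (upCfg N)
/-- The all-spins-down vector `|⇓⟩`. -/
def downVec (N : ℕ) : Cfg N → ℂ := basisVec (downCfg N)

/-- The partition function of the six-vertex model with domain wall boundary conditions:
`Z_N(λ_1,…,λ_N) = ⟨⇓| B(λ_N) ⋯ B(λ_1) |⇑⟩`. -/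
def Zfun (N : ℕ) (ν : Fin N → ℂ) (lam : Fin N → ℂ) : ℂ :=
  (((List.finRange N).reverse).map fun j => Bop ν (lam j)).prod (downCfg N) (upCfg N)

section Aux
variable {N : ℕ}

lemma basisVec_mulVec (A : Op N) (s : Cfg N) :
    A.mulVec (basisVec s) = fun s' => A s' s := by
  funext s'
  simp [basisVec, Matrix.mulVec_single]

lemma fin2_cases (t : Fin 2) : t = 0 ∨ t = 1 := by omega

lemma siteOp_mulVec (k : Fin N) (M : Matrix (Fin 2) (Fin 2) ℂ) (s : Cfg N) :
    (siteOp k M).mulVec (basisVec s) =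
      M 0 (s k) • basisVec (Function.update s k 0) +
      M 1 (s k) • basisVec (Function.update s k 1) := by
  funext s'
  rw [basisVec_mulVec]
  simp only [Pi.add_apply, Pi.smul_apply, basisVec, smul_eq_mul, siteOp, Matrix.of_apply,
    Pi.single_apply]
  by_cases h : ∀ i, i ≠ k → s' i = s i
  · have hup : ∀ t : Fin 2, s' = Function.update s k t ↔ s' k = t := by
      intro t
      constructor
      · intro ht; rw [ht]; simp [Function.update]
      · intro ht; funext i
        by_cases hi : i = k
        · subst hi; simpa using ht
        · simp [Function.update, hi, h i hi]
    rw [if_pos h]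
    rcases fin2_cases (s' k) with h0 | h0 <;>
      simp [hup, h0, eq_comm]
  · rw [if_neg h]
    push_neg at h
    obtain ⟨i, hik, hi⟩ := h
    have h0 : ∀ t : Fin 2, ¬ (s' = Function.update s k t) := by
      intro t ht
      apply hi
      rw [ht]
      simp [Function.update, hik]
    simp [h0]

lemma update_self_of_eq {s : Cfg N} {k : Fin N} {t : Fin 2} (h : s k = t) :
    Function.update s k t = s := by
  rw [← h]; exact Function.update_eq_self k s

lemma piPlus_mulVec (k : Fin N) (s : Cfg N) :
    (siteOp k piPlus).mulVec (basisVec s) = if s k = 0 then basisVec s else 0 := by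
  rw [siteOp_mulVec]
  rcases fin2_cases (s k) with h | h <;>
    simp [h, piPlus, update_self_of_eq h]

lemma piMinus_mulVec (k : Fin N) (s : Cfg N) :
    (siteOp k piMinus).mulVec (basisVec s) = if s k = 1 then basisVec s else 0 := by
  rw [siteOp_mulVec]
  rcases fin2_cases (s k) with h | h <;>
    simp [h, piMinus, update_self_of_eq h]

lemma sigmaMinus_mulVec (k : Fin N) (s : Cfg N) :
    (siteOp k sigmaMinus).mulVec (basisVec s) =
      if s k = 0 then basisVec (Function.update s k 1) else 0 := by
  rw [siteOp_mulVec]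
  rcases fin2_cases (s k) with h | h <;> simp [h, sigmaMinus]

lemma sigmaPlus_mulVec (k : Fin N) (s : Cfg N) :
    (siteOp k sigmaPlus).mulVec (basisVec s) =
      if s k = 1 then basisVec (Function.update s k 0) else 0 := by
  rw [siteOp_mulVec]
  rcases fin2_cases (s k) with h | h <;> simp [h, sigmaPlus]

lemma diagEntry_mulVec (x y : ℂ) (k : Fin N) (s : Cfg N) :
    (x • siteOp k piPlus + y • siteOp k piMinus).mulVec (basisVec s) =
      (if s k = 0 then x else y) • basisVec s := by
  rw [Matrix.add_mulVec, Matrix.smul_mulVec, Matrix.smul_mulVec,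
    piPlus_mulVec, piMinus_mulVec]
  rcases fin2_cases (s k) with h | h <;> simp [h]
/-- Configuration with the first `m` spins down, the rest up. -/
def stepCfg (N m : ℕ) : Cfg N := fun i => if i.val < m then 1 else 0

lemma stepCfg_zero : stepCfg N 0 = upCfg N := by
  funext i; simp [stepCfg, upCfg]

lemma stepCfg_last : stepCfg N N = downCfg N := by
  funext i; simp [stepCfg, downCfg, i.isLt]

lemma stepCfg_apply_lt {m : ℕ} {i : Fin N} (h : i.val < m) : stepCfg N m i = 1 := by
  simp [stepCfg, h]

lemma stepCfg_apply_ge {m : ℕ} {i : Fin N} (h : m ≤ i.val) : stepCfg N m i = 0 := by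
  simp [stepCfg, Nat.not_lt.mpr h]

lemma update_stepCfg (m : ℕ) (hm : m < N) :
    Function.update (stepCfg N m) ⟨m, hm⟩ 1 = stepCfg N (m + 1) := by
  funext i
  rcases eq_or_ne i ⟨m, hm⟩ with h | h
  · subst h; simp [Function.update, stepCfg]
  · rw [Function.update_of_ne h]
    have : i.val ≠ m := fun hv => h (Fin.ext hv)
    simp only [stepCfg]
    by_cases hlt : i.val < m
    · rw [if_pos hlt, if_pos (by omega)]
    · rw [if_neg hlt, if_neg (by omega)]

lemma prod_ite_lt_zero (f : Fin N → ℂ) :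
    (∏ i : Fin N, if i.val < 0 then f i else 1) = 1 := by simp

lemma prod_ite_lt_succ (f : Fin N → ℂ) (k : ℕ) (hk : k < N) :
    (∏ i : Fin N, if i.val < k + 1 then f i else 1) =
      f ⟨k, hk⟩ * ∏ i : Fin N, if i.val < k then f i else 1 := by
  rw [← Finset.prod_filter, ← Finset.prod_filter]
  have hins : Finset.univ.filter (fun i : Fin N => i.val < k + 1) =
      insert ⟨k, hk⟩ (Finset.univ.filter fun i : Fin N => i.val < k) := by
    ext i
    simp only [Finset.mem_filter, Finset.mem_insert, Finset.mem_univ, true_and, Fin.ext_iff]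
    omega
  rw [hins, Finset.prod_insert (by simp)]

lemma prod_ite_lt_last (f : Fin N → ℂ) :
    (∏ i : Fin N, if i.val < N then f i else 1) = ∏ i : Fin N, f i := by
  apply Finset.prod_congr rfl
  intro i _
  simp [i.isLt]
lemma invariant (ν : Fin N → ℂ) (m : Fin N) (k : ℕ) (hk : k ≤ N) :
    (if k ≤ m.val then
      (((((List.finRange N).take k).reverse).map fun j => Lop ν j (ν m)).prod 0 1).mulVec
          (basisVec (stepCfg N m.val)) = 0 ∧
      (((((List.finRange N).take k).reverse).map fun j => Lop ν j (ν m)).prod 1 1).mulVec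
          (basisVec (stepCfg N m.val)) =
        (∏ i : Fin N, if i.val < k then aW (ν m) (ν i) else 1) • basisVec (stepCfg N m.val)
    else
      (((((List.finRange N).take k).reverse).map fun j => Lop ν j (ν m)).prod 0 1).mulVec
          (basisVec (stepCfg N m.val)) =
        (∏ i : Fin N, if i.val < k then aW (ν m) (ν i) else 1) •
          basisVec (stepCfg N (m.val + 1)) ∧
      (((((List.finRange N).take k).reverse).map fun j => Lop ν j (ν m)).prod 1 1).mulVec
          (basisVec (stepCfg N m.val)) = 0) := by
  induction k with
  | zero =>
    rw [if_pos (Nat.zero_le _)]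
    constructor
    · simp [Matrix.one_apply_ne (show (0 : Fin 2) ≠ 1 by decide), Matrix.zero_mulVec]
    · simp [Matrix.one_apply_eq, Matrix.one_mulVec]
  | succ k ih =>
    have hkN : k < N := hk
    have ihk := ih (le_of_lt hkN)
    have hstep : (((List.finRange N).take (k + 1)).reverse).map (fun j => Lop ν j (ν m)) =
        Lop ν ⟨k, hkN⟩ (ν m) ::
          (((List.finRange N).take k).reverse).map (fun j => Lop ν j (ν m)) := by
      rw [List.take_succ]
      rw [List.getElem?_eq_getElem (by simpa using hkN)]
      simp
    rw [hstep, List.prod_cons]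
    set T := ((((List.finRange N).take k).reverse).map fun j => Lop ν j (ν m)).prod with hT
    have h01 : (Lop ν ⟨k, hkN⟩ (ν m) * T) 0 1 =
        (aW (ν m) (ν ⟨k, hkN⟩) • siteOp ⟨k, hkN⟩ piPlus +
          bW (ν m) (ν ⟨k, hkN⟩) • siteOp ⟨k, hkN⟩ piMinus) * T 0 1 +
        siteOp ⟨k, hkN⟩ sigmaMinus * T 1 1 := by
      rw [Matrix.mul_apply, Fin.sum_univ_two]
      simp [Lop]
    have h11 : (Lop ν ⟨k, hkN⟩ (ν m) * T) 1 1 =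
        siteOp ⟨k, hkN⟩ sigmaPlus * T 0 1 +
        (bW (ν m) (ν ⟨k, hkN⟩) • siteOp ⟨k, hkN⟩ piPlus +
          aW (ν m) (ν ⟨k, hkN⟩) • siteOp ⟨k, hkN⟩ piMinus) * T 1 1 := by
      rw [Matrix.mul_apply, Fin.sum_univ_two]
      simp [Lop]
    rcases lt_trichotomy k m.val with hkm | hkm | hkm
    · -- k < m.val : still below the flipping site
      rw [if_pos (le_of_lt hkm)] at ihk
      rw [if_pos (Nat.succ_le_of_lt hkm)]
      obtain ⟨hp, hq⟩ := ihk
      have hs : stepCfg N m.val ⟨k, hkN⟩ = 1 := stepCfg_apply_lt hkm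
      constructor
      · rw [h01, Matrix.add_mulVec, ← Matrix.mulVec_mulVec, ← Matrix.mulVec_mulVec, hp, hq,
          Matrix.mulVec_zero, Matrix.mulVec_smul, sigmaMinus_mulVec]
        simp [hs]
      · rw [h11, Matrix.add_mulVec, ← Matrix.mulVec_mulVec, ← Matrix.mulVec_mulVec, hp, hq,
          Matrix.mulVec_zero, Matrix.mulVec_smul, diagEntry_mulVec,
          prod_ite_lt_succ _ k hkN]
        simp [hs, smul_smul, mul_comm]
    · -- k = m.val : the flipping site
      rw [if_pos (le_of_eq hkm)] at ihk
      rw [if_neg (by omega)]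
      obtain ⟨hp, hq⟩ := ihk
      have hmk : (⟨k, hkN⟩ : Fin N) = m := Fin.ext hkm
      have hs : stepCfg N m.val ⟨k, hkN⟩ = 0 := stepCfg_apply_ge (le_of_eq hkm.symm)
      constructor
      · rw [h01, Matrix.add_mulVec, ← Matrix.mulVec_mulVec, ← Matrix.mulVec_mulVec, hp, hq,
          Matrix.mulVec_zero, Matrix.mulVec_smul, sigmaMinus_mulVec,
          prod_ite_lt_succ _ k hkN]
        rw [if_pos hs]
        have hupd : Function.update (stepCfg N m.val) ⟨k, hkN⟩ 1 = stepCfg N (m.val + 1) := by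
          rw [show (⟨k, hkN⟩ : Fin N) = ⟨m.val, m.isLt⟩ from Fin.ext hkm]
          exact update_stepCfg m.val m.isLt
        rw [hupd, hmk]
        simp [aW]
      · rw [h11, Matrix.add_mulVec, ← Matrix.mulVec_mulVec, ← Matrix.mulVec_mulVec, hp, hq,
          Matrix.mulVec_zero, Matrix.mulVec_smul, diagEntry_mulVec]
        rw [if_pos hs, hmk]
        simp [bW]
    · -- k > m.val : above the flipping site
      rw [if_neg (by omega)] at ihk
      rw [if_neg (by omega)]
      obtain ⟨hp, hq⟩ := ihk
      have hs : stepCfg N (m.val + 1) ⟨k, hkN⟩ = 0 :=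
        stepCfg_apply_ge (by simp only [Fin.val_mk]; omega)
      constructor
      · rw [h01, Matrix.add_mulVec, ← Matrix.mulVec_mulVec, ← Matrix.mulVec_mulVec, hp, hq,
          Matrix.mulVec_zero, Matrix.mulVec_smul, diagEntry_mulVec,
          prod_ite_lt_succ _ k hkN]
        simp [hs, smul_smul, mul_comm]
      · rw [h11, Matrix.add_mulVec, ← Matrix.mulVec_mulVec, ← Matrix.mulVec_mulVec, hp, hq,
          Matrix.mulVec_zero, Matrix.mulVec_smul, sigmaPlus_mulVec]
        simp [hs]
lemma Bstep (ν : Fin N → ℂ) (m : Fin N) :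
    (Bop ν (ν m)).mulVec (basisVec (stepCfg N m.val)) =
      (∏ i : Fin N, aW (ν m) (ν i)) • basisVec (stepCfg N (m.val + 1)) := by
  have h := invariant ν m N le_rfl
  rw [if_neg (by omega)] at h
  have htake : (List.finRange N).take N = List.finRange N := by
    apply List.take_of_length_le
    simp
  rw [htake] at h
  rw [Bop, monodromy, h.1, prod_ite_lt_last]

lemma mainInd (ν : Fin N → ℂ) (k : ℕ) (hk : k ≤ N) :
    ((((List.finRange N).take k).reverse.map fun j => Bop ν (ν j)).prod).mulVec (upVec N) =
      (∏ i : Fin N, if i.val < k then (∏ l, aW (ν i) (ν l)) else 1) •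
        basisVec (stepCfg N k) := by
  induction k with
  | zero => simp [Matrix.one_mulVec, stepCfg_zero, upVec]
  | succ k ih =>
    have hkN : k < N := hk
    have hstep : (((List.finRange N).take (k + 1)).reverse).map (fun j => Bop ν (ν j)) =
        Bop ν (ν ⟨k, hkN⟩) ::
          (((List.finRange N).take k).reverse).map (fun j => Bop ν (ν j)) := by
      rw [List.take_succ, List.getElem?_eq_getElem (by simpa using hkN)]
      simp
    rw [hstep, List.prod_cons, ← Matrix.mulVec_mulVec, ih (le_of_lt hkN),
      Matrix.mulVec_smul, Bstep ν ⟨k, hkN⟩, smul_smul,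
      prod_ite_lt_succ _ k hkN, mul_comm]
end Aux

end SixVertex
end

open SixVertex in
/-- `B(ν_N) ⋯ B(ν_1) |⇑⟩ = (∏_{k=1}^N a(ν_k)) |⇓⟩`, where
`a(λ) = ∏_{k=1}^N (λ - ν_k + 1)`; consequently
`Z_N(ν_1,…,ν_N) = ∏_{k=1}^N a(ν_k)`. -/
theorem Bprod_up_eq_down (N : ℕ) (hN : 1 ≤ N) (ν : Fin N → ℂ) :
    ((((List.finRange N).reverse).map fun k => Bop ν (ν k)).prod).mulVec (upVec N) =
        (∏ k, ∏ l, (ν k - ν l + 1)) • downVec N ∧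
      Zfun N ν ν = ∏ k, ∏ l, (ν k - ν l + 1) := by
  have htake : (List.finRange N).take N = List.finRange N :=
    List.take_of_length_le (by simp)
  have h := mainInd ν N le_rfl
  rw [htake, prod_ite_lt_last, stepCfg_last] at h
  have hcoef : (∏ i : Fin N, ∏ l, aW (ν i) (ν l)) = ∏ k, ∏ l, (ν k - ν l + 1) := by
    simp [aW]
  rw [hcoef] at h
  refine ⟨h, ?_⟩
  have h2 := congrFun h (downCfg N)
  rw [Zfun]
  simp only [upVec, downVec, basisVec, Matrix.mulVec_single_one, Matrix.col_apply, mul_one, Pi.smul_apply,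
    Pi.single_eq_same, smul_eq_mul, mul_one] at h2
  exact h2
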